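/- If G is a finite connected simple graph, then gp(G) ≤ α^ω(G). Moreover, if the diameter of G is at most 2, then gp(G) = α^ω(G). -/
import Mathlib


open SimpleGraph

variable {V : Type*}

/-- `S` is a general position set of `G`: no three pairwise distinct vertices of `S`
lie on a common shortest path, i.e. no `v ∈ S` lies strictly between `u, w ∈ S`. -/
def IsGPSet (G : SimpleGraph V) (S : Set V) : Prop :=
  ∀ u ∈ S, ∀ v ∈ S, ∀ w ∈ S, u ≠ v → v ≠ w → u ≠ w →
    ¬(G.Reachable u w ∧ G.dist u v + G.dist v w = G.dist u w)

/-- The general position number of `G`. -/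
noncomputable def gpNum (G : SimpleGraph V) [Fintype V] : ℕ :=
  sSup {n | ∃ S : Finset V, IsGPSet G ↑S ∧ S.card = n}

/-- `α^ω(G)`: the maximum number of vertices in a union of pairwise independent cliques
(`independent` meaning that vertices of distinct cliques are at distance at least two). -/
noncomputable def alphaOmega (G : SimpleGraph V) [Fintype V] [DecidableEq V] : ℕ :=
  sSup {n | ∃ 𝒞 : Finset (Finset V),
    (∀ C ∈ 𝒞, G.IsClique (C : Set V)) ∧
    (∀ C ∈ 𝒞, ∀ D ∈ 𝒞, C ≠ D → ∀ u ∈ C, ∀ v ∈ D, 2 ≤ G.dist u v) ∧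
    n = (𝒞.biUnion id).card}

/-- In a general position set, adjacency is "transitive". -/
lemma gp_adj_trans (G : SimpleGraph V) (hG : G.Connected) {S : Set V} (hS : IsGPSet G S)
    {u v w : V} (hu : u ∈ S) (hv : v ∈ S) (hw : w ∈ S)
    (h1 : G.Adj u v) (h2 : G.Adj v w) (hne : u ≠ w) : G.Adj u w := by
  by_contra hadj
  refine hS u hu v hv w hw h1.ne h2.ne hne ⟨hG.preconnected u w, ?_⟩
  have d1 : G.dist u v = 1 := dist_eq_one_iff_adj.2 h1
  have d2 : G.dist v w = 1 := dist_eq_one_iff_adj.2 h2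
  have hle : G.dist u w ≤ 2 := by
    have := hG.dist_triangle (u := u) (v := v) (w := w)
    omega
  have hpos : 0 < G.dist u w := hG.pos_dist_of_ne hne
  have hne1 : G.dist u w ≠ 1 := fun h => hadj (dist_eq_one_iff_adj.1 h)
  omega

lemma ediam_ne_top_of_connected [Fintype V] {G : SimpleGraph V} (hG : G.Connected) :
    G.ediam ≠ ⊤ := by
  have : Nonempty V := hG.nonempty
  obtain ⟨a, b, hab⟩ := G.exists_edist_eq_ediam_of_finite
  rw [← hab]
  exact edist_ne_top_iff_reachable.2 (hG.preconnected a b)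

theorem gp_le_alphaOmega [Fintype V] [DecidableEq V] (G : SimpleGraph V)
    (hG : G.Connected) :
    gpNum G ≤ alphaOmega G ∧ (G.diam ≤ 2 → gpNum G = alphaOmega G) := by
  classical
  have hbddAO : BddAbove {n | ∃ 𝒞 : Finset (Finset V),
      (∀ C ∈ 𝒞, G.IsClique (C : Set V)) ∧
      (∀ C ∈ 𝒞, ∀ D ∈ 𝒞, C ≠ D → ∀ u ∈ C, ∀ v ∈ D, 2 ≤ G.dist u v) ∧
      n = (𝒞.biUnion id).card} := by
    refine ⟨Fintype.card V, ?_⟩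
    rintro n ⟨𝒞, -, -, rfl⟩
    exact Finset.card_le_univ _
  have hbddGP : BddAbove {n | ∃ S : Finset V, IsGPSet G ↑S ∧ S.card = n} := by
    refine ⟨Fintype.card V, ?_⟩
    rintro n ⟨S, -, rfl⟩
    exact Finset.card_le_univ _
  have hgpne : {n | ∃ S : Finset V, IsGPSet G ↑S ∧ S.card = n}.Nonempty := by
    refine ⟨0, ∅, fun u hu => absurd hu (by simp), by simp⟩
  have part1 : gpNum G ≤ alphaOmega G := by
    refine csSup_le hgpne ?_
    rintro n ⟨S, hSgp, rfl⟩
    set R : V → V → Prop := fun u v => u = v ∨ G.Adj u v with hR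
    have hRsymm : ∀ u v, R u v → R v u := by
      rintro u v (rfl | h)
      · exact Or.inl rfl
      · exact Or.inr h.symm
    have hRtrans : ∀ u ∈ S, ∀ v ∈ S, ∀ w ∈ S, R u v → R v w → R u w := by
      rintro u hu v hv w hw (rfl | h1) h2
      · exact h2
      rcases h2 with rfl | h2
      · exact Or.inr h1
      by_cases huw : u = w
      · exact Or.inl huw
      · exact Or.inr (gp_adj_trans G hG hSgp (Finset.mem_coe.2 hu) (Finset.mem_coe.2 hv)
          (Finset.mem_coe.2 hw) h1 h2 huw)
    set cls : V → Finset V := fun v => S.filter (fun u => R u v) with hcls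
    have hmem : ∀ u v, u ∈ cls v ↔ u ∈ S ∧ R u v := by
      intro u v
      simp [hcls, Finset.mem_filter]
    have hclseq : ∀ v ∈ S, ∀ w ∈ S, R v w → cls v = cls w := by
      intro v hv w hw hvw
      ext u
      rw [hmem, hmem]
      constructor
      · rintro ⟨hu, hru⟩
        exact ⟨hu, hRtrans u hu v hv w hw hru hvw⟩
      · rintro ⟨hu, hru⟩
        exact ⟨hu, hRtrans u hu w hw v hv hru (hRsymm _ _ hvw)⟩
    refine le_csSup hbddAO ⟨S.image cls, ?_, ?_, ?_⟩
    · -- cliques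
      intro C hC
      obtain ⟨v, hv, rfl⟩ := Finset.mem_image.1 hC
      intro x hx y hy hxy
      obtain ⟨hxS, hxv⟩ := (hmem x v).1 hx
      obtain ⟨hyS, hyv⟩ := (hmem y v).1 hy
      have hxy' : R x y := hRtrans x hxS v hv y hyS hxv (hRsymm _ _ hyv)
      rcases hxy' with rfl | h
      · exact absurd rfl hxy
      · exact h
    · -- independence
      intro C hC D hD hCD u hu x hx
      obtain ⟨v, hv, rfl⟩ := Finset.mem_image.1 hC
      obtain ⟨w, hw, rfl⟩ := Finset.mem_image.1 hD
      obtain ⟨huS, huv⟩ := (hmem u v).1 hu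
      obtain ⟨hxS, hxw⟩ := (hmem x w).1 hx
      have hnR : ¬ R u x := by
        intro hux
        exact hCD (hclseq v hv w hw
          (hRtrans v hv u huS w hw
            (hRtrans v hv x hxS u huS
              (hRtrans v hv u huS x hxS (hRsymm _ _ huv) hux) (hRsymm _ _ hux))
            (hRtrans u huS x hxS w hw hux hxw)))
      have hne : u ≠ x := fun h => hnR (Or.inl h)
      have hnadj : ¬ G.Adj u x := fun h => hnR (Or.inr h)
      have hpos : 0 < G.dist u x := hG.pos_dist_of_ne hne
      have hne1 : G.dist u x ≠ 1 := fun h => hnadj (dist_eq_one_iff_adj.1 h)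
      omega
    · -- cardinality
      have : (S.image cls).biUnion id = S := by
        ext u
        simp only [Finset.mem_biUnion, Finset.mem_image, id]
        constructor
        · rintro ⟨C, ⟨v, hv, rfl⟩, hu⟩
          exact ((hmem u v).1 hu).1
        · intro hu
          exact ⟨cls u, ⟨u, hu, rfl⟩, (hmem u u).2 ⟨hu, Or.inl rfl⟩⟩
      rw [this]
  refine ⟨part1, fun hdiam => le_antisymm part1 ?_⟩
  have hd2 : ∀ x y : V, G.dist x y ≤ 2 := fun x y =>
    le_trans (dist_le_diam (ediam_ne_top_of_connected hG)) hdiam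
  refine csSup_le ⟨0, ∅, by simp, by simp, by simp⟩ ?_
  rintro n ⟨𝒞, hclique, hind, rfl⟩
  refine le_csSup hbddGP ⟨𝒞.biUnion id, ?_, rfl⟩
  intro u hu v hv w hw huv hvw huw
  rintro ⟨-, hsum⟩
  simp only [Finset.coe_biUnion, Set.mem_iUnion, Finset.mem_coe, id] at hu hv hw
  obtain ⟨C, hC, huC⟩ := hu
  obtain ⟨D, hD, hvD⟩ := hv
  obtain ⟨E, hE, hwE⟩ := hw
  have p1 : 0 < G.dist u v := hG.pos_dist_of_ne huv
  have p2 : 0 < G.dist v w := hG.pos_dist_of_ne hvw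
  have d1 : G.dist u v = 1 := by have := hd2 u w; omega
  have d2 : G.dist v w = 1 := by have := hd2 u w; omega
  have d3 : G.dist u w = 2 := by omega
  have hCD : C = D := by
    by_contra h
    have := hind C hC D hD h u huC v hvD
    omega
  have hDE : D = E := by
    by_contra h
    have := hind D hD E hE h v hvD w hwE
    omega
  have hadj : G.Adj u w := by
    refine hclique C hC (Finset.mem_coe.2 huC) ?_ huw
    rw [hCD, hDE]
    exact Finset.mem_coe.2 hwE
  have : G.dist u w = 1 := dist_eq_one_iff_adj.2 hadj
  omega
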